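/- arXiv:2305.17638 — 2 statements merged into one kernel-verified Lean document; each statement's English description precedes it below -/
import Mathlib

section
/- Let V be a finite-dimensional complex vector space of dimension r ≥ 1 and N a nilpotent endomorphism of V with N^{r-1} ≠ 0. Then for every H in the linear span of {N, N^2, ..., N^{r-1}}, there exists G ∈ End(V) such that [N, G] = H. -/
/-- If `N` is a nilpotent endomorphism of an `r`-dimensional complex vector space
with `N^(r-1) ≠ 0`, then every `H` in the span of `{N, N², …, N^(r-1)}` is a
commutator `[N, G]` for some endomorphism `G`. -/
theorem stmt_1 (V : Type*) [AddCommGroup V] [Module ℂ V] [FiniteDimensional ℂ V]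
    (r : ℕ) (hr : 1 ≤ r) (hdim : Module.finrank ℂ V = r)
    (N : Module.End ℂ V) (hnil : IsNilpotent N) (hN : N ^ (r - 1) ≠ 0) :
    ∀ H ∈ Submodule.span ℂ (Set.range fun i : Fin (r - 1) => N ^ ((i : ℕ) + 1)),
      ∃ G : Module.End ℂ V, N * G - G * N = H := by
  have hNr : N ^ r = 0 := by
    have h := hnil.charpoly_eq_X_pow_finrank
    have h2 := LinearMap.aeval_self_charpoly N
    rw [h, hdim] at h2
    simpa using h2
  obtain ⟨v, hv⟩ : ∃ v, (N ^ (r - 1)) v ≠ 0 := by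
    by_contra h; push_neg at h; exact hN (LinearMap.ext h)
  -- linear independence of v, Nv, ..., N^{r-1} v
  have hli : LinearIndependent ℂ (fun i : Fin r => (N ^ (i : ℕ)) v) := by
    rw [Fintype.linearIndependent_iff]
    intro g hg
    suffices h : ∀ n : ℕ, ∀ i : Fin r, (i : ℕ) = n → g i = 0 by
      intro i; exact h i i rfl
    intro n
    induction n using Nat.strong_induction_on with
    | _ n ih =>
    intro i hin
    subst hin
    -- apply N^(r-1-i) to the relation
    have key := congrArg (N ^ (r - 1 - (i : ℕ))) hg
    rw [map_sum, map_zero] at key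
    have : ∀ j : Fin r, (N ^ (r - 1 - (i : ℕ))) (g j • (N ^ (j : ℕ)) v)
        = if j = i then g i • (N ^ (r - 1)) v else 0 := by
      intro j
      rcases lt_trichotomy (j : ℕ) (i : ℕ) with hj | hj | hj
      · have h0 : g j = 0 := ih (j : ℕ) hj j rfl
        have hne : j ≠ i := fun h => absurd (h ▸ hj) (lt_irrefl _)
        simp [h0, hne]
      · have hji : j = i := Fin.ext hj
        subst hji
        rw [if_pos rfl, map_smul, ← Module.End.mul_apply, ← pow_add]
        have hjr : (j : ℕ) < r := j.isLt
        rw [Nat.sub_add_cancel (by omega : (j : ℕ) ≤ r - 1)]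
      · rw [if_neg (fun h => by simp [h] at hj), map_smul, ← Module.End.mul_apply,
          ← pow_add]
        have hjr : (j : ℕ) < r := j.isLt
        have hir : (i : ℕ) < r := i.isLt
        have hge : r ≤ r - 1 - (i : ℕ) + (j : ℕ) := by omega
        rw [← Nat.sub_add_cancel hge, pow_add, hNr, mul_zero]
        simp
    rw [Finset.sum_congr rfl (fun j _ => this j), Finset.sum_ite_eq' Finset.univ i
      (fun _ => g i • (N ^ (r - 1)) v)] at key
    simp only [Finset.mem_univ, if_true] at key
    rcases smul_eq_zero.mp key with h | h
    · exact h
    · exact absurd h hv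
  haveI : Nonempty (Fin r) := ⟨⟨0, hr⟩⟩
  have hcard : Fintype.card (Fin r) = Module.finrank ℂ V := by simp [hdim]
  let b := basisOfLinearIndependentOfCardEqFinrank hli hcard
  have hb : ∀ i, b i = (N ^ (i : ℕ)) v := fun i =>
    congrFun (coe_basisOfLinearIndependentOfCardEqFinrank hli hcard) i
  -- the grading operator D with N*D - D*N = N
  let D : Module.End ℂ V := b.constr ℂ (fun i => (-(i : ℕ) : ℂ) • b i)
  have hD : N * D - D * N = N := by
    apply b.ext
    intro i
    have hDb : ∀ j, D (b j) = (-(j : ℕ) : ℂ) • b j := fun j => b.constr_basis ℂ _ j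
    have hNb : N (b i) = (N ^ ((i : ℕ) + 1)) v := by
      rw [hb, ← Module.End.mul_apply, ← pow_succ']
    by_cases hi : (i : ℕ) + 1 < r
    · have hNb' : N (b i) = b ⟨(i : ℕ) + 1, hi⟩ := by rw [hNb, hb]
      simp only [LinearMap.sub_apply, Module.End.mul_apply, hDb, hNb', map_smul, hDb]
      rw [← hNb', hNb]
      push_cast
      rw [← sub_smul]
      have : (-(i : ℕ) : ℂ) - (-((i : ℕ) + 1)) = 1 := by ring
      rw [this, one_smul]
    · have hi1 : (i : ℕ) + 1 = r := by omega
      have hNb0 : N (b i) = 0 := by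
        rw [hNb, hi1, hNr]; simp
      simp only [LinearMap.sub_apply, Module.End.mul_apply, hDb, hNb0, map_smul, map_zero,
        smul_zero, sub_zero]
  -- each generator N^(k+1) is a commutator
  have hgen : ∀ k : ℕ, ∃ G : Module.End ℂ V, N * G - G * N = N ^ (k + 1) := by
    intro k
    refine ⟨D * N ^ k, ?_⟩
    have : N * (D * N ^ k) - D * N ^ k * N = (N * D - D * N) * N ^ k := by
      rw [sub_mul, mul_assoc, mul_assoc, mul_assoc, pow_mul_comm']
    rw [this, hD, ← pow_succ']
  intro H hH
  induction hH using Submodule.span_induction with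
  | mem x hx =>
    obtain ⟨i, rfl⟩ := hx
    exact hgen _
  | zero => exact ⟨0, by simp⟩
  | add x y _ _ hx hy =>
    obtain ⟨G₁, h₁⟩ := hx
    obtain ⟨G₂, h₂⟩ := hy
    exact ⟨G₁ + G₂, by rw [← h₁, ← h₂]; noncomm_ring⟩
  | smul c x _ hx =>
    obtain ⟨G, h⟩ := hx
    refine ⟨c • G, ?_⟩
    rw [← h, mul_smul_comm, smul_mul_assoc, smul_sub]
end

section
/- Let (E, h) be a Hermitian holomorphic vector bundle over an open subset U of ℂ with Chern connection ∇ = ∇_z dz + ∇_{z̄} dz̄, and let f be an endomorphism of E with h-adjoint f†, satisfying the harmonicity relation ∇_z∇_{z̄} - ∇_{z̄}∇_z + [f, f†] = 0. Then for any smooth section s of E: -∂_z∂_{z̄}|s|²_h = 2 Re h((-∇_z∇_{z̄} + f†∘f)s, s) - |∇_z s|²_h - |∇_{z̄} s|²_h - |f(s)|²_h - |f†(s)|²_h. -/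
/-- Weitzenböck-type identity for a harmonic bundle over an open subset of `ℂ`.
Sections form an additive group `S`, `h` is the pointwise Hermitian pairing (a
`ℂ`-valued function of the base point), `Dz, Dzb` are the holomorphic and
antiholomorphic derivative operators on functions, `covz, covzb` the components of
the Chern connection (compatible with `h` in the stated sense), and `fE` the Higgs
endomorphism with `h`-adjoint `fEd`, satisfying the harmonicity relation
`∇_z∇_z̄ - ∇_z̄∇_z + [f, f†] = 0`.  Then for any smooth section `s` and base point `x`:
`-∂_z∂_z̄ |s|²_h = 2 Re h((-∇_z∇_z̄ + f†∘f)s, s) - |∇_z s|² - |∇_z̄ s|² - |f s|² - |f† s|²`. -/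
theorem stmt_15 (S : Type*) [AddCommGroup S]
    (h : S → S → ℂ → ℂ)
    (haddl : ∀ u v w, h (u + v) w = h u w + h v w)
    (haddr : ∀ u v w, h u (v + w) = h u v + h u w)
    (hherm : ∀ u v x, h v u x = (starRingEnd ℂ) (h u v x))
    (Dz Dzb : (ℂ → ℂ) → ℂ → ℂ)
    (hDzadd : ∀ a b, Dz (a + b) = Dz a + Dz b)
    (covz covzb fE fEd : S → S)
    (hcompat₁ : ∀ u v, Dz (h u v) = h (covz u) v + h u (covzb v))
    (hcompat₂ : ∀ u v, Dzb (h u v) = h (covzb u) v + h u (covz v))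
    (hadj : ∀ u v, h (fE u) v = h u (fEd v))
    (hharm : ∀ u, covz (covzb u) - covzb (covz u) + fE (fEd u) - fEd (fE u) = 0)
    (s : S) (x : ℂ) :
    -(Dz (Dzb (h s s)) x) =
      ((2 * (h (fEd (fE s) - covz (covzb s)) s x).re
        - (h (covz s) (covz s) x).re - (h (covzb s) (covzb s) x).re
        - (h (fE s) (fE s) x).re - (h (fEd s) (fEd s) x).re : ℝ) : ℂ) := by
  have hsubr : ∀ u v w, h u (v - w) x = h u v x - h u w x := by
    intro u v w
    have h1 : h u ((v - w) + w) = h u (v - w) + h u w := haddr u (v - w) w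
    rw [sub_add_cancel] at h1
    have h2 : h u v x = h u (v - w) x + h u w x := by rw [h1]; rfl
    exact eq_sub_of_add_eq h2.symm
  have hsubl : ∀ u v w, h (u - v) w x = h u w x - h v w x := by
    intro u v w
    have h1 : h ((u - v) + v) w = h (u - v) w + h v w := haddl (u - v) v w
    rw [sub_add_cancel] at h1
    have h2 : h u w x = h (u - v) w x + h v w x := by rw [h1]; rfl
    exact eq_sub_of_add_eq h2.symm
  have e3 : covzb (covz s) = covz (covzb s) + fE (fEd s) - fEd (fE s) := by
    have e2 := hharm s
    rw [← sub_eq_zero, ← neg_eq_zero, ← e2]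
    abel
  have key : Dz (Dzb (h s s)) x
      = h (covz (covzb s)) s x + h (covzb s) (covzb s) x
        + (h (covz s) (covz s) x
          + (h s (covz (covzb s)) x + h s (fE (fEd s)) x - h s (fEd (fE s)) x)) := by
    rw [hcompat₂ s s, hDzadd]
    show Dz (h (covzb s) s) x + Dz (h s (covz s)) x = _
    rw [hcompat₁, hcompat₁]
    show h (covz (covzb s)) s x + h (covzb s) (covzb s) x
        + (h (covz s) (covz s) x + h s (covzb (covz s)) x) = _
    rw [e3, hsubr, haddr]
    show _ + (_ + (h s (covz (covzb s)) x + h s (fE (fEd s)) x - _)) = _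
    ring
  have hAc : h s (covz (covzb s)) x = (starRingEnd ℂ) (h (covz (covzb s)) s x) :=
    hherm (covz (covzb s)) s x
  have hD : h s (fEd (fE s)) x = h (fE s) (fE s) x := by
    have := congrFun (hadj s (fE s)) x
    exact this.symm
  have hDc : h (fEd (fE s)) s x = (starRingEnd ℂ) (h (fE s) (fE s) x) := by
    rw [hherm s (fEd (fE s)) x, hD]
  have hEc : h s (fE (fEd s)) x = (starRingEnd ℂ) (h (fEd s) (fEd s) x) := by
    rw [hherm (fE (fEd s)) s x, congrFun (hadj (fEd s) s) x]
  have hreal : ∀ u, (h u u x).im = 0 := by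
    intro u
    have := hherm u u x
    have h2 := congrArg Complex.im this
    simp [Complex.conj_im] at h2
    linarith
  rw [key, hAc, hD, hEc, hsubl, hDc]
  apply Complex.ext
  · simp only [Complex.neg_re, Complex.add_re, Complex.sub_re, Complex.conj_re,
      Complex.ofReal_re, Complex.mul_re]
    ring
  · simp only [Complex.neg_im, Complex.add_im, Complex.sub_im, Complex.conj_im,
      Complex.ofReal_im, hreal]
    ring
end
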